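/- Let A and B be unital complex Banach algebras, let X be a dense subalgebra of A, and let φ : A → B be a unital continuous algebra homomorphism with dense range that is relatively spectral to X (i.e., sp_B(φ(x)) = sp_A(x) for every x ∈ X). Then for every invertible element b of B there exists a ∈ X such that a is invertible in A and φ(a) lies in the same connected component of GL(B) as b. In other words, the induced map GL(A)/GL_0(A) → GL(B)/GL_0(B) is surjective. -/

import Mathlib

/-- If φ : A → B is a unital continuous homomorphism of unital complex Banach algebras,
with dense range and relatively spectral to a dense subalgebra X of A, then for every
invertible b ∈ B there is a ∈ X, invertible in A, such that φ(a) lies in the same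
connected component of GL(B) as b; i.e. the induced map
GL(A)/GL₀(A) → GL(B)/GL₀(B) is surjective. -/
theorem induced_map_on_components_surjective
    {A B : Type*}
    [NormedRing A] [NormedAlgebra ℂ A] [CompleteSpace A]
    [NormedRing B] [NormedAlgebra ℂ B] [CompleteSpace B]
    (φ : A →ₐ[ℂ] B) (hφ : Continuous φ) (hφdense : DenseRange φ)
    (X : Subalgebra ℂ A) (hX : Dense (X : Set A))
    (hrs : ∀ x ∈ X, spectrum ℂ (φ x) = spectrum ℂ x) :
    ∀ b : Bˣ, ∃ a ∈ X, ∃ u : Aˣ, (u : A) = a ∧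
      ∃ v : Bˣ, (v : B) = φ a ∧ v ∈ connectedComponent b := by
  intro b
  rcases subsingleton_or_nontrivial B with hB | hB
  · -- trivial case: B is a zero ring
    have : Subsingleton Bˣ := ⟨fun u w => Units.ext (Subsingleton.elim _ _)⟩
    refine ⟨1, one_mem X, 1, rfl, 1, Subsingleton.elim _ _, ?_⟩
    have hb : (1 : Bˣ) = b := Subsingleton.elim _ _
    rw [hb]; exact mem_connectedComponent
  · -- main case
    set r : ℝ := ‖((b⁻¹ : Bˣ) : B)‖⁻¹ with hr
    have hrpos : 0 < r := inv_pos.mpr (Units.norm_pos b⁻¹)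
    have hdense : Dense (φ '' (X : Set A)) := hφdense.dense_image hφ hX
    obtain ⟨y, hyX, hyb⟩ := Metric.mem_closure_iff.mp (hdense (b : B)) r hrpos
    obtain ⟨x, hxX, rfl⟩ := hyX
    have hnorm : ‖φ x - (b : B)‖ < r := by
      rwa [dist_eq_norm, norm_sub_rev] at hyb
    set v : Bˣ := Units.ofNearby b (φ x) hnorm with hv
    have hvval : (v : B) = φ x := rfl
    -- x is invertible in A
    have hux : IsUnit x := by
      have h0 : (0 : ℂ) ∉ spectrum ℂ x := by
        rw [← hrs x hxX, spectrum.zero_notMem_iff]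
        exact ⟨v, hvval⟩
      exact spectrum.isUnit_of_zero_notMem ℂ h0
    obtain ⟨u, huval⟩ := hux
    refine ⟨x, hxX, u, huval, v, hvval, ?_⟩
    -- connectedness via the ball around b
    have hball : Metric.ball ((b : B)) r ⊆ Set.range (Units.val : Bˣ → B) := by
      intro z hz
      rw [Metric.mem_ball, dist_eq_norm] at hz
      exact (Units.ofNearby b z hz).isUnit
    have hpre : IsPreconnected ((Units.val : Bˣ → B) ⁻¹' Metric.ball ((b : B)) r) :=
      ((convex_ball _ _).isPreconnected).preimage_of_isOpenMap Units.val_injective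
        Units.isOpenMap_val hball
    have hsub : (Units.val : Bˣ → B) ⁻¹' Metric.ball ((b : B)) r ⊆ connectedComponent b :=
      hpre.subset_connectedComponent (by
        simp [Metric.mem_ball, hrpos])
    exact hsub (by simpa [Metric.mem_ball, dist_eq_norm, hvval] using hnorm)
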